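/- arXiv:1304.5459 — 6 statements merged into one kernel-verified Lean document; each statement's English description precedes it below -/
import Mathlib

section
/- Let $M$ be a real symmetric $n \times n$ matrix, $U$ a real symmetric positive semi-definite $n \times n$ matrix, $\beta > 0$, and let $L = \begin{pmatrix} 0 & I \\ M & -2\beta U \end{pmatrix}$ acting on $\mathbb{C}^n \times \mathbb{C}^n$. If $\lambda$ is an eigenvalue of $L$ with $\mathrm{Re}(\lambda) = 0$ and $\mathrm{Im}(\lambda) \neq 0$, then $\lambda^2$ is a negative real eigenvalue of $M$ and any associated eigenvector $(x, v)$ of $L$ satisfies $Ux = 0$ and $Mx = \lambda^2 x$. -/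
open Matrix Complex
open scoped ComplexOrder

theorem stmt_8 (n : ℕ) (M U : Matrix (Fin n) (Fin n) ℝ)
    (hM : M.IsSymm) (hU : U.PosSemidef) (β : ℝ) (hβ : 0 < β)
    (Mc Uc : Matrix (Fin n) (Fin n) ℂ)
    (hMc : Mc = M.map Complex.ofReal) (hUc : Uc = U.map Complex.ofReal)
    (L : Matrix (Fin n ⊕ Fin n) (Fin n ⊕ Fin n) ℂ)
    (hL : L = Matrix.fromBlocks 0 1 Mc (-((2 * β : ℂ) • Uc)))
    (lam : ℂ) (hre : lam.re = 0) (him : lam.im ≠ 0)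
    (x v : Fin n → ℂ) (hxv : Sum.elim x v ≠ 0)
    (heig : L.mulVec (Sum.elim x v) = lam • Sum.elim x v) :
    x ≠ 0 ∧ (lam ^ 2).im = 0 ∧ (lam ^ 2).re < 0 ∧
      Uc.mulVec x = 0 ∧ Mc.mulVec x = lam ^ 2 • x := by
  -- extract the two block equations
  subst hL
  rw [fromBlocks_mulVec] at heig
  have h1 : v = lam • x := by
    funext i
    have := congrFun heig (Sum.inl i)
    simpa using this
  have h2 : Mc *ᵥ x + (-((2 * β : ℂ) • Uc)) *ᵥ v = lam • v := by
    funext i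
    have := congrFun heig (Sum.inr i)
    simpa using this
  -- x ≠ 0
  have hx : x ≠ 0 := by
    intro hx0
    apply hxv
    funext i
    cases i with
    | inl i => simp [hx0]
    | inr i => simp [h1, hx0]
  -- lam^2 arithmetic
  have hlam2im : (lam ^ 2).im = 0 := by
    simp [pow_two, Complex.mul_im, hre]
  have hlam2re : (lam ^ 2).re < 0 := by
    have : (lam ^ 2).re = -(lam.im * lam.im) := by
      simp [pow_two, Complex.mul_re, hre]
    rw [this]
    nlinarith [sq_nonneg lam.im, mul_self_pos.mpr him]
  -- Hermitian Mc
  have hMcH : Mc.IsHermitian := by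
    ext i j
    have hsym := congrFun (congrFun hM i) j
    simp only [Matrix.transpose_apply] at hsym
    simp [hMc, Matrix.conjTranspose_apply, Matrix.map_apply, Complex.conj_ofReal, hsym]
  -- PSD Uc
  have hUcP : Uc.PosSemidef := by
    obtain ⟨m, w, hw⟩ := Matrix.posSemidef_iff_eq_sum_vecMulVec.mp hU
    obtain ⟨B, hB⟩ : ∃ B : Matrix (Fin m) (Fin n) ℝ, U = Bᴴ * B := ⟨Matrix.of w, by
      ext i j; simp [hw, vecMulVec_apply, mul_apply, Matrix.sum_apply, mul_comm]⟩
    have : Uc = (B.map Complex.ofReal)ᴴ * (B.map Complex.ofReal) := by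
      ext i j
      simp [hUc, hB, Matrix.mul_apply, Matrix.conjTranspose_apply, Matrix.map_apply,
        Complex.conj_ofReal]
    rw [this]
    exact Matrix.posSemidef_conjTranspose_mul_self _
  -- rewrite h2
  rw [h1] at h2
  have h2' : Mc *ᵥ x = lam ^ 2 • x + ((2 * β : ℂ) * lam) • (Uc *ᵥ x) := by
    have := h2
    rw [Matrix.neg_mulVec, Matrix.smul_mulVec, Matrix.mulVec_smul] at this
    have := eq_add_of_add_neg_eq this
    rw [this]
    funext i
    simp [pow_two, smul_smul]
  -- scalar equation
  set a := star x ⬝ᵥ Mc *ᵥ x with ha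
  set b := star x ⬝ᵥ x with hb
  set s := star x ⬝ᵥ Uc *ᵥ x with hs
  have hE : a = lam ^ 2 * b + (2 * β : ℂ) * lam * s := by
    rw [ha, h2', dotProduct_add, dotProduct_smul, dotProduct_smul, hb, hs]
    simp [smul_eq_mul]
  -- a is real
  have haim : a.im = 0 := by
    have hstar : star a = a := by
      rw [ha, ← Matrix.star_dotProduct, Matrix.star_mulVec, hMcH.eq,
        ← Matrix.dotProduct_mulVec]
    have := congrArg Complex.im hstar
    simp only [Complex.star_def, Complex.conj_im] at this
    linarith
  -- b is real
  have hbim : b.im = 0 := by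
    rw [hb]
    simp only [dotProduct, Complex.im_sum]
    apply Finset.sum_eq_zero
    intro i _
    simp [Complex.mul_im]
    ring
  -- s is real nonneg
  have hsnn : 0 ≤ s := hUcP.dotProduct_mulVec_nonneg x
  have hsim : s.im = 0 := by
    rw [Complex.le_def] at hsnn
    exact hsnn.2.symm
  -- imaginary part of hE
  have hsre : s.re = 0 := by
    have h := congrArg Complex.im hE
    simp [Complex.add_im, Complex.mul_im, hlam2im, hbim, hsim, hre, haim] at h
    rcases h with (h | h) | h
    · exact absurd h hβ.ne'
    · exact absurd h him
    · exact h
  have hs0 : s = 0 := Complex.ext hsre hsim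
  have hUx : Uc *ᵥ x = 0 := (hUcP.dotProduct_mulVec_zero_iff x).mp hs0
  refine ⟨hx, hlam2im, hlam2re, hUx, ?_⟩
  rw [h2', hUx]
  simp
end

section
/- Let $M$ be a Hermitian $n \times n$ matrix, $U$ positive semi-definite Hermitian, $\beta > 0$, $L = \begin{pmatrix} 0 & I \\ M & -2\beta U \end{pmatrix}$, and suppose $(x, \lambda x)$ is an eigenvector of $L$ with $\lambda$ purely imaginary nonzero, $x^* x = 1$, and $Ux = 0$. Then there is no generalized eigenvector at this eigenvector: the system $(L - \lambda I)(u, w) = (x, \lambda x)$ has no solution $(u, w)$. -/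
open Matrix Complex ComplexOrder

theorem stmt_10 (n : ℕ) (M U : Matrix (Fin n) (Fin n) ℂ)
    (hM : M.IsHermitian) (hU : U.PosSemidef) (β : ℝ) (hβ : 0 < β)
    (L : Matrix (Fin n ⊕ Fin n) (Fin n ⊕ Fin n) ℂ)
    (hL : L = Matrix.fromBlocks 0 1 M (-((2 * β : ℂ) • U)))
    (lam : ℂ) (hre : lam.re = 0) (hlam : lam ≠ 0)
    (x : Fin n → ℂ) (hx : star x ⬝ᵥ x = 1) (hker : U.mulVec x = 0)
    (heig : L.mulVec (Sum.elim x (lam • x)) = lam • Sum.elim x (lam • x)) :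
    ¬ ∃ u w : Fin n → ℂ,
      L.mulVec (Sum.elim u w) - lam • Sum.elim u w = Sum.elim x (lam • x) := by
  rintro ⟨u, w, h⟩
  subst hL
  rw [Matrix.fromBlocks_mulVec] at heig h
  have hMx : M.mulVec x = (lam * lam) • x := by
    funext i
    have := congrFun heig (Sum.inr i)
    simp [Matrix.mulVec_smul, Matrix.neg_mulVec, Matrix.smul_mulVec, hker,
      smul_smul, mul_comm] at this
    simpa [mul_assoc] using this
  have h1 : ∀ i, w i - lam * u i = x i := by
    intro i
    have := congrFun h (Sum.inl i)
    simpa using this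
  have hw : w = x + lam • u := by
    funext i
    have := h1 i
    simp only [Pi.add_apply, Pi.smul_apply, smul_eq_mul]
    linear_combination this
  have h2 : ∀ i, (M.mulVec u) i + (-((2 * β : ℂ) • U)).mulVec w i - lam * w i = lam * x i := by
    intro i
    have := congrFun h (Sum.inr i)
    simpa using this
  have hkey : M.mulVec u - ((2 * β : ℂ) * lam) • U.mulVec u - (lam * lam) • u = (2 * lam) • x := by
    funext i
    have := h2 i
    rw [hw] at this
    simp only [Matrix.mulVec_add, Matrix.mulVec_smul, Matrix.neg_mulVec,
      Matrix.smul_mulVec, hker, Pi.add_apply, Pi.smul_apply, Pi.neg_apply, Pi.sub_apply,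
      smul_eq_mul, smul_zero, neg_zero, zero_add, add_zero, Pi.zero_apply] at this ⊢
    linear_combination this
  have hxU : vecMul (star x) U = 0 := by
    have h3 : star (U.mulVec x) = star x ᵥ* Uᴴ := Matrix.star_mulVec U x
    rw [hker, hU.isHermitian.eq] at h3
    simpa using h3.symm
  have hconj : (starRingEnd ℂ) lam = -lam := by
    apply Complex.ext <;> simp [hre]
  have hxM : vecMul (star x) M = (lam * lam) • star x := by
    have h3 : star (M.mulVec x) = star x ᵥ* Mᴴ := Matrix.star_mulVec M x
    rw [hM.eq, hMx] at h3
    rw [← h3]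
    funext i
    simp [Pi.smul_apply, smul_eq_mul, hconj]
  have hdot := congrArg (fun v => star x ⬝ᵥ v) hkey
  simp only [dotProduct_sub, dotProduct_smul, Matrix.dotProduct_mulVec, hxU, hxM,
    smul_dotProduct, zero_dotProduct, smul_eq_mul, hx, mul_one] at hdot
  apply hlam
  have : (2 : ℂ) * lam = 0 := by linear_combination -hdot
  simpa using this
end

section
/- Let $M$ be a Hermitian $n \times n$ matrix, $U$ positive semi-definite Hermitian, $\beta > 0$, and $L = \begin{pmatrix} 0 & I \\ M & -2\beta U \end{pmatrix}$. Suppose $Mx = 0$, $x^* x = 1$, and $Ux \neq 0$. Then the equation $L(u, w) = (x, 0)$ has no solution $(u, w) \in \mathbb{C}^n \times \mathbb{C}^n$ (i.e., $(x, 0)$ generates no generalized eigenvector at eigenvalue $0$). -/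
open Matrix Complex ComplexOrder

theorem stmt_12 (n : ℕ) (M U : Matrix (Fin n) (Fin n) ℂ)
    (hM : M.IsHermitian) (hU : U.PosSemidef) (β : ℝ) (hβ : 0 < β)
    (L : Matrix (Fin n ⊕ Fin n) (Fin n ⊕ Fin n) ℂ)
    (hL : L = Matrix.fromBlocks 0 1 M (-((2 * β : ℂ) • U)))
    (x : Fin n → ℂ) (hker : M.mulVec x = 0) (hx : star x ⬝ᵥ x = 1)
    (hUx : U.mulVec x ≠ 0) :
    ¬ ∃ u w : Fin n → ℂ, L.mulVec (Sum.elim u w) = Sum.elim x 0 := by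
  rintro ⟨u, w, h⟩
  rw [hL, Matrix.fromBlocks_mulVec] at h
  have h1 : (0 : Matrix (Fin n) (Fin n) ℂ).mulVec u + (1 : Matrix (Fin n) (Fin n) ℂ).mulVec w = x := by
    funext i; exact congrFun h (Sum.inl i)
  have h2 : M.mulVec u + (-((2 * β : ℂ) • U)).mulVec w = 0 := by
    funext i; exact congrFun h (Sum.inr i)
  rw [Matrix.zero_mulVec, zero_add, Matrix.one_mulVec] at h1
  subst h1
  have h2' : M.mulVec u = ((2 * β : ℂ) • U).mulVec w := by
    have := h2
    rw [Matrix.neg_mulVec] at this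
    linear_combination (norm := module) this
  have hvm : star w ᵥ* M = 0 := by
    rw [← hM.eq, ← Matrix.star_mulVec, hker]; simp
  have hkey : star w ⬝ᵥ M.mulVec u = 0 := by
    rw [Matrix.dotProduct_mulVec, hvm, zero_dotProduct]
  rw [h2', Matrix.smul_mulVec, dotProduct_smul] at hkey
  have h2β : (2 * β : ℂ) ≠ 0 := by
    simp only [ne_eq, mul_eq_zero, not_or]
    exact ⟨two_ne_zero, Complex.ofReal_ne_zero.mpr hβ.ne'⟩
  have : star w ⬝ᵥ U.mulVec w = 0 := by
    rcases smul_eq_zero.mp hkey with h | h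
    · exact absurd h h2β
    · exact h
  exact hUx ((hU.dotProduct_mulVec_zero_iff w).mp this)
end

section
/- Let $M$ be a real symmetric $n \times n$ matrix with largest eigenvalue $\mu_1 \leq 0$, $U$ a positive semi-definite symmetric matrix, and $\beta \geq 0$. Then every eigenvalue $\lambda \in \mathbb{C}$ of the block matrix $L = \begin{pmatrix} 0 & I \\ M & -2\beta U \end{pmatrix}$ satisfies $\mathrm{Re}(\lambda) \leq 0$. -/
open Matrix Complex

lemma quad_re (n : ℕ) (M : Matrix (Fin n) (Fin n) ℝ) (x : Fin n → ℂ) :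
    (star x ⬝ᵥ (M.map Complex.ofReal *ᵥ x)).re
      = (fun i => (x i).re) ⬝ᵥ (M *ᵥ fun i => (x i).re)
        + (fun i => (x i).im) ⬝ᵥ (M *ᵥ fun i => (x i).im) := by
  simp only [dotProduct, mulVec, Pi.star_apply, map_apply, Complex.re_sum, Finset.mul_sum,
    Complex.star_def, Complex.mul_re, Complex.star_def, Complex.mul_im, Complex.mul_re, Complex.conj_re, Complex.conj_im, Complex.ofReal_re, Complex.ofReal_im]
  rw [← Finset.sum_add_distrib]
  apply Finset.sum_congr rfl; intro i _
  rw [← Finset.sum_add_distrib]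
  apply Finset.sum_congr rfl; intro j _
  ring

lemma quad_im (n : ℕ) (M : Matrix (Fin n) (Fin n) ℝ) (hM : M.IsSymm) (x : Fin n → ℂ) :
    (star x ⬝ᵥ (M.map Complex.ofReal *ᵥ x)).im = 0 := by
  have h : ∀ i j, M i j = M j i := fun i j => (Matrix.IsSymm.apply hM j i)
  have : (star x ⬝ᵥ (M.map Complex.ofReal *ᵥ x)).im
      = -(star x ⬝ᵥ (M.map Complex.ofReal *ᵥ x)).im := by
    simp only [dotProduct, mulVec, Pi.star_apply, map_apply, Complex.im_sum, Finset.mul_sum,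
      Complex.star_def, Complex.mul_im, Complex.mul_re, Complex.conj_re, Complex.conj_im, Complex.ofReal_re, Complex.ofReal_im,
      ← Finset.sum_neg_distrib]
    rw [Finset.sum_comm]
    apply Finset.sum_congr rfl; intro i _
    apply Finset.sum_congr rfl; intro j _
    rw [h i j]; ring
  linarith

theorem stmt_14 (n : ℕ) (M U : Matrix (Fin n) (Fin n) ℝ)
    (hM : M.IsSymm) (hMneg : (-M).PosSemidef) (hU : U.PosSemidef)
    (β : ℝ) (hβ : 0 ≤ β)
    (L : Matrix (Fin n ⊕ Fin n) (Fin n ⊕ Fin n) ℂ)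
    (hL : L = Matrix.fromBlocks 0 1 (M.map Complex.ofReal)
      (-((2 * β : ℂ) • U.map Complex.ofReal))) :
    ∀ lam : ℂ, (∃ z : (Fin n ⊕ Fin n) → ℂ, z ≠ 0 ∧ L.mulVec z = lam • z) →
      lam.re ≤ 0 := by
  rintro lam ⟨z, hz, hzeq⟩
  set x : Fin n → ℂ := z ∘ Sum.inl with hx
  set y : Fin n → ℂ := z ∘ Sum.inr with hy
  have hzelim : z = Sum.elim x y := by ext (i|i) <;> rfl
  rw [hL, hzelim, Matrix.fromBlocks_mulVec] at hzeq
  have h1 : y = lam • x := by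
    funext i
    have := congrFun hzeq (Sum.inl i)
    simpa using this
  have h2 : (M.map Complex.ofReal) *ᵥ x + (-((2 * β : ℂ) • U.map Complex.ofReal)) *ᵥ y
      = lam • y := by
    funext i
    have := congrFun hzeq (Sum.inr i)
    simpa using this
  have hxne : x ≠ 0 := by
    intro h0
    apply hz
    rw [hzelim, h0, h1, h0]
    simp
  set a : ℂ := star x ⬝ᵥ ((M.map Complex.ofReal) *ᵥ x) with ha
  set b : ℂ := star x ⬝ᵥ ((U.map Complex.ofReal) *ᵥ x) with hb
  set c : ℂ := star x ⬝ᵥ x with hc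
  have key : a - 2 * β * lam * b = lam ^ 2 * c := by
    have := congrArg (fun w => star x ⬝ᵥ w) h2
    simp only [h1, dotProduct_add, Matrix.neg_mulVec, dotProduct_neg, Matrix.mulVec_smul,
      Matrix.smul_mulVec, dotProduct_smul, smul_eq_mul, smul_smul] at this
    rw [ha, hb, hc]
    linear_combination this
  -- realness facts
  have hUsymm : U.IsSymm := by
    ext i j; simpa using congrFun (congrFun hU.1 i) j
  have haim : a.im = 0 := quad_im n M hM x
  have hbim : b.im = 0 := quad_im n U hUsymm x
  have hare : a.re ≤ 0 := by
    have h1' := (hMneg.dotProduct_mulVec_nonneg (fun i => (x i).re))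
    have h2' := (hMneg.dotProduct_mulVec_nonneg (fun i => (x i).im))
    simp only [star_trivial, Matrix.neg_mulVec, dotProduct_neg] at h1' h2'
    have := quad_re n M x
    rw [← ha] at this
    linarith
  have hbre : 0 ≤ b.re := by
    have h1' := (hU.dotProduct_mulVec_nonneg (fun i => (x i).re))
    have h2' := (hU.dotProduct_mulVec_nonneg (fun i => (x i).im))
    simp only [star_trivial] at h1' h2'
    have := quad_re n U x
    rw [← hb] at this
    linarith
  have hcim : c.im = 0 := by
    simp [hc, dotProduct, Complex.im_sum, Complex.mul_im]
    ring_nf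
    simp [mul_comm]
  have hcre : 0 < c.re := by
    obtain ⟨i0, hi0⟩ := Function.ne_iff.mp hxne
    have hrepr : c.re = ∑ i, ((x i).re ^ 2 + (x i).im ^ 2) := by
      simp only [hc, dotProduct, Pi.star_apply, Complex.star_def, Complex.re_sum,
        Complex.mul_re, Complex.conj_re, Complex.conj_im]
      refine Finset.sum_congr rfl fun i _ => by ring
    rw [hrepr]
    refine Finset.sum_pos' (fun i _ => by positivity) ⟨i0, Finset.mem_univ _, ?_⟩
    have h' : (x i0).re ≠ 0 ∨ (x i0).im ≠ 0 := by
      by_contra h; push_neg at h; exact hi0 (Complex.ext h.1 h.2)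
    rcases h' with h | h
    · nlinarith [pow_two_pos_of_ne_zero h, sq_nonneg (x i0).im]
    · nlinarith [pow_two_pos_of_ne_zero h, sq_nonneg (x i0).re]
  -- extract real and imaginary parts of key
  have key2 : a - 2 * (β : ℂ) * lam * b = lam * lam * c := by
    rw [key]; ring
  have keyim := congrArg Complex.im key2
  have keyre := congrArg Complex.re key2
  simp only [Complex.sub_im, Complex.sub_re, Complex.mul_im, Complex.mul_re,
    Complex.ofReal_re, Complex.ofReal_im, Complex.re_ofNat, Complex.im_ofNat,
    haim, hbim, hcim] at keyim keyre
  by_contra hpos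
  push_neg at hpos
  have hv : lam.im * (2 * lam.re * c.re + 2 * β * b.re) = 0 := by
    linear_combination -keyim
  rcases mul_eq_zero.mp hv with hv0 | hv0
  · rw [hv0] at keyre
    nlinarith [mul_pos (mul_pos hpos hpos) hcre, mul_nonneg (mul_nonneg hβ (le_of_lt hpos)) hbre]
  · nlinarith [mul_pos hpos hcre, mul_nonneg hβ hbre]
end

section
/- Let $M$ be a real symmetric $n \times n$ matrix and $G$ a real symmetric positive semi-definite $n \times n$ matrix with $\ker G \subseteq \ker M$. Let $L = \begin{pmatrix} 0 & I \\ M & -G \end{pmatrix}$. Then any eigenvalue $\lambda$ of $L$ with $\mathrm{Re}(\lambda) = 0$ must satisfy $\lambda = 0$; moreover $\ker L = \ker M \times \{0\}$, i.e., $(x, v) \in \ker L$ iff $v = 0$ and $Mx = 0$. -/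
open Matrix Complex
open scoped ComplexOrder

lemma aux_posSemidef_map {n : ℕ} {G : Matrix (Fin n) (Fin n) ℝ} (hG : G.PosSemidef) :
    (G.map Complex.ofReal).PosSemidef := by
  obtain ⟨B, rfl⟩ : ∃ B : Matrix (Fin n) (Fin n) ℝ, G = Bᴴ * B := by
    classical
    open scoped MatrixOrder in
    obtain ⟨X, hX, -, rfl⟩ := CFC.exists_sqrt_of_isSelfAdjoint_of_quasispectrumRestricts
      hG.isHermitian (QuasispectrumRestricts.nnreal_of_nonneg hG.nonneg)
    exact ⟨X, by rw [← Matrix.star_eq_conjTranspose, hX.star_eq]⟩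
  have : (Bᴴ * B).map Complex.ofReal = (B.map Complex.ofReal)ᴴ * (B.map Complex.ofReal) := by
    ext i j
    simp [Matrix.mul_apply, Matrix.conjTranspose_apply]
  rw [this]
  exact Matrix.posSemidef_conjTranspose_mul_self _

lemma aux_hermitian_map {n : ℕ} {M : Matrix (Fin n) (Fin n) ℝ} (hM : M.IsSymm) :
    (M.map Complex.ofReal).IsHermitian := by
  ext i j
  simp [Matrix.conjTranspose_apply, ← Matrix.IsSymm.apply hM i j]

lemma aux_mulVec_map_re_im {n : ℕ} (A : Matrix (Fin n) (Fin n) ℝ) (x : Fin n → ℂ) (j : Fin n) :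
    ((A.map Complex.ofReal).mulVec x j).re = A.mulVec (fun k => (x k).re) j ∧
    ((A.map Complex.ofReal).mulVec x j).im = A.mulVec (fun k => (x k).im) j := by
  constructor <;>
  simp [Matrix.mulVec, dotProduct, Complex.re_sum, Complex.im_sum]

lemma aux_ker_c {n : ℕ} {M G : Matrix (Fin n) (Fin n) ℝ}
    (hker : ∀ y : Fin n → ℝ, G.mulVec y = 0 → M.mulVec y = 0)
    (x : Fin n → ℂ) (hx : (G.map Complex.ofReal).mulVec x = 0) :
    (M.map Complex.ofReal).mulVec x = 0 := by
  have hre : G.mulVec (fun k => (x k).re) = 0 := by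
    funext j
    have := congrFun hx j
    have h := (aux_mulVec_map_re_im G x j).1
    rw [this] at h
    simpa using h.symm
  have him : G.mulVec (fun k => (x k).im) = 0 := by
    funext j
    have := congrFun hx j
    have h := (aux_mulVec_map_re_im G x j).2
    rw [this] at h
    simpa using h.symm
  have h1 := hker _ hre
  have h2 := hker _ him
  funext j
  apply Complex.ext
  · rw [(aux_mulVec_map_re_im M x j).1]
    simpa using congrFun h1 j
  · rw [(aux_mulVec_map_re_im M x j).2]
    simpa using congrFun h2 j

lemma aux_herm_dot_real {n : ℕ} {A : Matrix (Fin n) (Fin n) ℂ} (hA : A.IsHermitian)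
    (x : Fin n → ℂ) : (star x ⬝ᵥ A.mulVec x).im = 0 := by
  have h : star x ⬝ᵥ A.mulVec x = star (star x ⬝ᵥ A.mulVec x) := by
    conv_lhs => rw [star_dotProduct, star_mulVec, hA.eq, ← dotProduct_mulVec]
  have := congrArg Complex.im h.symm
  simp only [Complex.star_def, Complex.conj_im] at this
  linarith

theorem stmt_17 (n : ℕ) (M G : Matrix (Fin n) (Fin n) ℝ)
    (hM : M.IsSymm) (hG : G.PosSemidef)
    (hker : ∀ y : Fin n → ℝ, G.mulVec y = 0 → M.mulVec y = 0)
    (Mc Gc : Matrix (Fin n) (Fin n) ℂ)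
    (hMc : Mc = M.map Complex.ofReal) (hGc : Gc = G.map Complex.ofReal)
    (L : Matrix (Fin n ⊕ Fin n) (Fin n ⊕ Fin n) ℂ)
    (hL : L = Matrix.fromBlocks 0 1 Mc (-Gc)) :
    (∀ lam : ℂ, (∃ z : (Fin n ⊕ Fin n) → ℂ, z ≠ 0 ∧ L.mulVec z = lam • z) →
        lam.re = 0 → lam = 0) ∧
    (∀ x v : Fin n → ℂ,
        L.mulVec (Sum.elim x v) = 0 ↔ (v = 0 ∧ Mc.mulVec x = 0)) := by
  subst hMc hGc hL
  set Mc := M.map Complex.ofReal with hMc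
  set Gc := G.map Complex.ofReal with hGc
  have hGcP : Gc.PosSemidef := aux_posSemidef_map hG
  have hMcH : Mc.IsHermitian := aux_hermitian_map hM
  constructor
  · rintro lam ⟨z, hz, hzeq⟩ hre
    set x : Fin n → ℂ := z ∘ Sum.inl with hxdef
    set v : Fin n → ℂ := z ∘ Sum.inr with hvdef
    have hz' : z = Sum.elim x v := (Sum.elim_comp_inl_inr z).symm
    rw [hz', Matrix.fromBlocks_mulVec] at hzeq
    simp only [Sum.elim_comp_inl, Sum.elim_comp_inr] at hzeq
    have h1 : v = lam • x := by
      funext i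
      have := congrFun hzeq (Sum.inl i)
      simpa using this
    have h2 : Mc.mulVec x - lam • (Gc.mulVec x) = (lam ^ 2) • x := by
      funext i
      have := congrFun hzeq (Sum.inr i)
      simp only [Pi.add_apply, Matrix.neg_mulVec, Pi.neg_apply, Pi.smul_apply,
        smul_eq_mul, Sum.elim_inr, h1] at this
      simp only [Pi.sub_apply, Pi.smul_apply, smul_eq_mul, h1]
      rw [Matrix.mulVec_smul] at this
      simp only [Pi.smul_apply, smul_eq_mul] at this
      linear_combination this
    have hxne : x ≠ 0 := by
      intro hx0
      apply hz
      rw [hz', hx0, h1, hx0, smul_zero]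
      funext i; cases i <;> rfl
    set a := star x ⬝ᵥ Mc.mulVec x with ha
    set b := star x ⬝ᵥ Gc.mulVec x with hb
    set c := star x ⬝ᵥ x with hc
    have key : a - lam * b = lam ^ 2 * c := by
      have := congrArg (fun w => star x ⬝ᵥ w) h2
      simpa [dotProduct_sub, dotProduct_smul, smul_eq_mul] using this
    have ham : a.im = 0 := aux_herm_dot_real hMcH x
    have hbm : b.im = 0 := aux_herm_dot_real hGcP.isHermitian x
    have hcm : c.im = 0 := by
      rw [hc]
      simp only [dotProduct, Complex.im_sum, Pi.star_apply, Complex.star_def,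
        Complex.mul_im, Complex.conj_re, Complex.conj_im]
      apply Finset.sum_eq_zero
      intro i _
      ring
    have hkey2 : lam.im * b.re = 0 := by
      have := congrArg Complex.im key
      simp only [Complex.sub_im, Complex.mul_im, pow_two, Complex.mul_re, hre, ham, hbm, hcm,
        zero_mul, mul_zero, sub_zero, zero_sub, add_zero, zero_add] at this
      linarith
    rcases mul_eq_zero.mp hkey2 with ht | hbre
    · exact Complex.ext hre ht
    · have hb0 : b = 0 := Complex.ext hbre hbm
      have hGx : Gc.mulVec x = 0 := (hGcP.dotProduct_mulVec_zero_iff x).mp hb0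
      have hMx : Mc.mulVec x = 0 := aux_ker_c hker x hGx
      have : (lam ^ 2) • x = 0 := by
        rw [← h2, hMx, hGx, smul_zero, sub_zero]
      rcases smul_eq_zero.mp this with h | h
      · exact pow_eq_zero_iff (by norm_num) |>.mp h
      · exact absurd h hxne
  · intro x v
    rw [Matrix.fromBlocks_mulVec]
    constructor
    · intro h
      have h1 : v = 0 := by
        funext i
        have := congrFun h (Sum.inl i)
        simpa using this
      refine ⟨h1, ?_⟩
      funext i
      have := congrFun h (Sum.inr i)
      simp [h1, Matrix.neg_mulVec] at this
      simpa using this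
    · rintro ⟨hv, hMx⟩
      subst hv
      funext i
      cases i with
      | inl i => simp
      | inr i => simp [hMx, Matrix.neg_mulVec]
end

section
/- Let $x_j = R e^{2\pi i j / N}$, $j = 1, \ldots, N$, be equally spaced points on a circle of radius $R > 0$, and let $\tilde{k}: (0,\infty) \to \mathbb{R}$ be differentiable. Then for each $j$, $\sum_{l \neq j} \tilde{k}'(|x_j - x_l|) \frac{x_j - x_l}{|x_j - x_l|} = 0$ for all $j$ if and only if $\sum_{p=1}^{N-1} \sin\left(\frac{p\pi}{N}\right) \tilde{k}'\left(2R \sin\left(\frac{p\pi}{N}\right)\right) = 0$. -/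
open Real Complex Finset

lemma aux_exp (a : ℝ) : Complex.exp ((a:ℂ) * Complex.I)
    = (Real.cos a : ℂ) + (Real.sin a : ℂ) * Complex.I := by
  rw [Complex.exp_mul_I, Complex.ofReal_cos, Complex.ofReal_sin]

lemma one_sub_exp (a : ℝ) : 1 - Complex.exp (((2*a :ℝ):ℂ) * Complex.I)
    = (2 * Real.sin a : ℝ) * ((Real.sin a : ℂ) - (Real.cos a : ℂ) * Complex.I) := by
  have h1 : Real.cos (2*a) = 1 - 2 * Real.sin a ^ 2 := by
    rw [Real.cos_two_mul]
    have := Real.sin_sq_add_cos_sq a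
    nlinarith
  rw [aux_exp, h1, Real.sin_two_mul]
  push_cast
  ring

lemma abs_w (a : ℝ) : ‖(Real.sin a : ℂ) - (Real.cos a : ℂ) * Complex.I‖ = 1 := by
  have : ((Real.sin a : ℂ) - (Real.cos a : ℂ) * Complex.I)
      = Complex.exp ((a:ℂ) * Complex.I) * (-Complex.I) := by
    rw [aux_exp]; ring_nf; rw [Complex.I_sq]; ring
  rw [this, norm_mul, Complex.norm_exp_ofReal_mul_I]
  simp

lemma term_eq (N : ℕ) (hN : 2 ≤ N) (R : ℝ) (hR : 0 < R) (kd : ℝ → ℝ)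
    (x : ℕ → ℂ)
    (hx : ∀ j : ℕ, x j = (R : ℂ) * Complex.exp (2 * π * Complex.I * j / N))
    (j l p : ℕ) (hp1 : 1 ≤ p) (hp2 : p ≤ N - 1)
    (hcase : l = j + p ∨ l + N = j + p) :
    (kd ‖x j - x l‖ : ℂ) * ((x j - x l) / (‖x j - x l‖ : ℂ))
      = Complex.exp (2 * π * Complex.I * j / N) *
        ((kd (2 * R * Real.sin ((p:ℝ) * π / N)) : ℂ) *
          ((Real.sin ((p:ℝ) * π / N) : ℂ) - (Real.cos ((p:ℝ) * π / N) : ℂ) * Complex.I)) := by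
  have hNpos : (0:ℝ) < N := by positivity
  have hNC : (N:ℂ) ≠ 0 := by exact_mod_cast hNpos.ne'
  set a : ℝ := (p:ℝ) * π / N with ha
  have hpN : (p:ℝ) < N := by exact_mod_cast (by omega : p < N)
  have hapos : 0 < a := by
    apply div_pos (mul_pos _ Real.pi_pos) hNpos
    exact_mod_cast hp1
  have halt : a < π := by
    rw [ha, div_lt_iff₀ hNpos]
    nlinarith [Real.pi_pos]
  have hsin : 0 < Real.sin a := Real.sin_pos_of_pos_of_lt_pi hapos halt
  have hs : (0:ℝ) < 2 * R * Real.sin a := by positivity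
  -- exp for l
  have hel : Complex.exp (2 * π * Complex.I * l / N)
      = Complex.exp (2 * π * Complex.I * j / N) * Complex.exp (((2*a : ℝ):ℂ) * Complex.I) := by
    rw [← Complex.exp_add]
    rcases hcase with h | h
    · congr 1
      have hl : (l:ℂ) = (j:ℂ) + p := by exact_mod_cast congrArg (Nat.cast (R := ℂ)) h
      have ha2 : ((2*a : ℝ):ℂ) = 2*(p:ℂ)*π/N := by rw [ha]; push_cast; ring
      rw [hl, ha2]
      field_simp
    · have harg : 2 * π * Complex.I * j / N + ((2*a : ℝ):ℂ) * Complex.I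
          = 2 * π * Complex.I * l / N + 2 * π * Complex.I := by
        have hc : (l:ℂ) + N = (j:ℂ) + p := by exact_mod_cast congrArg (Nat.cast (R := ℂ)) h
        have ha2 : ((2*a : ℝ):ℂ) = 2*(p:ℂ)*π/N := by rw [ha]; push_cast; ring
        rw [ha2]
        field_simp
        linear_combination (-1:ℂ) * hc
      rw [harg, Complex.exp_add, Complex.exp_two_pi_mul_I, mul_one]
  have hdiff : x j - x l
      = ((2 * R * Real.sin a : ℝ) : ℂ) *
        (Complex.exp (2 * π * Complex.I * j / N) *
          ((Real.sin a : ℂ) - (Real.cos a : ℂ) * Complex.I)) := by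
    rw [hx j, hx l, hel]
    have := one_sub_exp a
    push_cast at this ⊢
    linear_combination (R : ℂ) * Complex.exp (2 * π * Complex.I * j / N) * this
  have hej : ‖Complex.exp (2 * π * Complex.I * j / N)‖ = 1 := by
    have : (2 * π * Complex.I * j / N) = ((2 * π * j / N : ℝ) : ℂ) * Complex.I := by
      push_cast; ring
    rw [this, Complex.norm_exp_ofReal_mul_I]
  have habs : ‖x j - x l‖ = 2 * R * Real.sin a := by
    rw [hdiff, norm_mul, norm_mul, hej, abs_w, Complex.norm_real, Real.norm_of_nonneg hs.le]
    ring
  rw [habs, hdiff]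
  have hsne : ((2 * R * Real.sin a : ℝ):ℂ) ≠ 0 := by exact_mod_cast hs.ne'
  rw [mul_comm (((2 * R * Real.sin a : ℝ)):ℂ), mul_div_assoc, div_self hsne, mul_one]
  ring
lemma cos_sum (N : ℕ) (hN : 2 ≤ N) (g : ℝ → ℝ) :
    ∑ p ∈ Finset.Icc 1 (N-1), Real.cos ((p:ℝ)*π/N) * g (Real.sin ((p:ℝ)*π/N)) = 0 := by
  have hNpos : (0:ℝ) < N := by positivity
  have key : ∑ p ∈ Finset.Icc 1 (N-1), Real.cos ((p:ℝ)*π/N) * g (Real.sin ((p:ℝ)*π/N))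
      = ∑ p ∈ Finset.Icc 1 (N-1), -(Real.cos ((p:ℝ)*π/N) * g (Real.sin ((p:ℝ)*π/N))) := by
    apply Finset.sum_nbij' (fun p => N - p) (fun p => N - p)
    · intro a ha
      simp only [Finset.mem_Icc] at ha ⊢
      omega
    · intro a ha
      simp only [Finset.mem_Icc] at ha ⊢
      omega
    · intro a ha
      simp only [Finset.mem_Icc] at ha
      omega
    · intro a ha
      simp only [Finset.mem_Icc] at ha
      omega
    · intro a ha
      simp only [Finset.mem_Icc] at ha
      have hc : ((N - a : ℕ) : ℝ) = (N : ℝ) - a := by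
        push_cast [Nat.cast_sub (by omega : a ≤ N)]; ring
      have harg : ((N - a : ℕ) : ℝ) * π / N = π - (a:ℝ)*π/N := by
        rw [hc]; field_simp
      rw [harg, Real.cos_pi_sub, Real.sin_pi_sub]
      ring
  have := key
  rw [Finset.sum_neg_distrib] at this
  linarith

theorem stmt_19 (N : ℕ) (hN : 2 ≤ N) (R : ℝ) (hR : 0 < R)
    (k kd : ℝ → ℝ) (hk : ∀ r : ℝ, 0 < r → HasDerivAt k (kd r) r)
    (x : ℕ → ℂ)
    (hx : ∀ j : ℕ, x j = (R : ℂ) * Complex.exp (2 * π * Complex.I * j / N)) :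
    (∀ j ∈ Finset.Icc 1 N,
        ∑ l ∈ (Finset.Icc 1 N).erase j,
          (kd ‖x j - x l‖ : ℂ) *
            ((x j - x l) / (‖x j - x l‖ : ℂ)) = 0)
      ↔ ∑ p ∈ Finset.Icc 1 (N - 1),
          Real.sin ((p : ℝ) * π / N) * kd (2 * R * Real.sin ((p : ℝ) * π / N)) = 0 := by
  have main : ∀ j ∈ Finset.Icc 1 N,
      (∑ l ∈ (Finset.Icc 1 N).erase j,
        (kd ‖x j - x l‖ : ℂ) * ((x j - x l) / (‖x j - x l‖ : ℂ)))
      = Complex.exp (2 * π * Complex.I * j / N) *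
        ((∑ p ∈ Finset.Icc 1 (N-1),
          Real.sin ((p:ℝ)*π/N) * kd (2*R*Real.sin ((p:ℝ)*π/N)) : ℝ) : ℂ) := by
    intro j hj
    simp only [Finset.mem_Icc] at hj
    have step1 : (∑ l ∈ (Finset.Icc 1 N).erase j,
          (kd ‖x j - x l‖ : ℂ) * ((x j - x l) / (‖x j - x l‖ : ℂ)))
        = ∑ p ∈ Finset.Icc 1 (N-1),
            Complex.exp (2 * π * Complex.I * j / N) *
              ((kd (2*R*Real.sin ((p:ℝ)*π/N)) : ℂ) *
                ((Real.sin ((p:ℝ)*π/N):ℂ) - (Real.cos ((p:ℝ)*π/N):ℂ) * Complex.I)) := by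
      apply Finset.sum_nbij' (fun l => if j < l then l - j else l + N - j)
        (fun p => if p + j ≤ N then p + j else p + j - N)
      · intro l hl
        simp only [Finset.mem_erase, Finset.mem_Icc] at hl ⊢
        split_ifs <;> omega
      · intro p hp
        simp only [Finset.mem_Icc] at hp
        simp only [Finset.mem_erase, Finset.mem_Icc]
        split_ifs <;> omega
      · intro l hl
        simp only [Finset.mem_erase, Finset.mem_Icc] at hl
        split_ifs <;> omega
      · intro p hp
        simp only [Finset.mem_Icc] at hp
        split_ifs <;> omega
      · intro l hl
        simp only [Finset.mem_erase, Finset.mem_Icc] at hl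
        apply term_eq N hN R hR kd x hx j l _ (by split_ifs <;> omega) (by split_ifs <;> omega)
        split_ifs with hcond
        · left; omega
        · right; omega
    rw [step1, ← Finset.mul_sum]
    congr 1
    have hcos := cos_sum N hN (fun s => kd (2*R*s))
    have expand : (∑ p ∈ Finset.Icc 1 (N-1),
          (kd (2*R*Real.sin ((p:ℝ)*π/N)) : ℂ) *
            ((Real.sin ((p:ℝ)*π/N):ℂ) - (Real.cos ((p:ℝ)*π/N):ℂ) * Complex.I))
        = ((∑ p ∈ Finset.Icc 1 (N-1),
            Real.sin ((p:ℝ)*π/N) * kd (2*R*Real.sin ((p:ℝ)*π/N)) : ℝ) : ℂ)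
          - ((∑ p ∈ Finset.Icc 1 (N-1),
            Real.cos ((p:ℝ)*π/N) * kd (2*R*Real.sin ((p:ℝ)*π/N)) : ℝ) : ℂ) * Complex.I := by
      push_cast
      rw [Finset.sum_mul, ← Finset.sum_sub_distrib]
      apply Finset.sum_congr rfl
      intro p _
      ring
    rw [expand, hcos]
    push_cast
    ring
  constructor
  · intro h
    have h1 : (1:ℕ) ∈ Finset.Icc 1 N := by
      simp only [Finset.mem_Icc]
      omega
    have hz := h 1 h1
    rw [main 1 h1] at hz
    rcases mul_eq_zero.1 hz with h' | h'
    · exact absurd h' (Complex.exp_ne_zero _)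
    · exact_mod_cast h'
  · intro h j hj
    rw [main j hj, h, Complex.ofReal_zero, mul_zero]
end
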